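/- Let r ≥ 2 be an integer, let A be a set of k ≥ 6 positive integers, and let H be a set of t ≥ 2 positive integers with (k−1)r − 1 < min(H) < max(H) < kr. Let m_1 = ⌊min(H)/r⌋. If |H^{(r)}A| = m_1·r·(k − m_1) + (min(H) − m_1·r)·(k − 2m_1 − 1) + t, then H is an arithmetic progression with some common difference d with 1 ≤ d ≤ r − 1, and A is an arithmetic progression with common difference d·min(A). -/

import Mathlib

/-- The generalized `h`-fold sumset `h^(r)A`: all sums of `h` elements of `A`
where every summand appears at most `r` times. -/
def genSumset (r h : ℕ) (A : Finset ℤ) : Set ℤ :=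
  {x | ∃ lam : ℤ → ℕ, (∀ a, lam a ≤ r) ∧ (∀ a ∉ A, lam a = 0) ∧
    (∑ a ∈ A, lam a) = h ∧ (∑ a ∈ A, (lam a : ℤ) * a) = x}

/-- The generalized `H`-fold sumset `H^(r)A = ⋃_{h ∈ H} h^(r)A`. -/
def HSumset (r : ℕ) (H : Finset ℕ) (A : Finset ℤ) : Set ℤ :=
  ⋃ h ∈ H, genSumset r h A

/-- `S` is an arithmetic progression of natural numbers with common difference `d`. -/
def IsAPNat (S : Finset ℕ) (d : ℕ) : Prop :=
  ∃ s : ℕ, S = (Finset.range S.card).image (fun i => s + i * d)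

/-- `S` is an arithmetic progression of integers with common difference `d`. -/
def IsAPInt (S : Finset ℤ) (d : ℤ) : Prop :=
  ∃ s : ℤ, S = (Finset.range S.card).image (fun i : ℕ => s + (i : ℤ) * d)

open Finset Pointwise

lemma mem_nsmul_iff (A : Finset ℤ) (j : ℕ) (x : ℤ) :
    x ∈ j • A ↔ ∃ μ : ℤ → ℕ, (∀ a ∉ A, μ a = 0) ∧ (∑ a ∈ A, μ a) = j ∧
      (∑ a ∈ A, (μ a : ℤ) * a) = x := by
  induction j generalizing x with
  | zero =>
    simp only [zero_smul]
    constructor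
    · intro hx
      rw [Finset.mem_zero] at hx
      exact ⟨fun _ => 0, fun _ _ => rfl, by simp, by simp [hx]⟩
    · rintro ⟨μ, hoff, hsum, hval⟩
      rw [Finset.mem_zero]
      rw [Finset.sum_eq_zero_iff] at hsum
      rw [← hval]
      apply Finset.sum_eq_zero
      intro a ha
      simp [hsum a ha]
  | succ n ih =>
    rw [succ_nsmul, Finset.mem_add]
    constructor
    · rintro ⟨y, hy, b, hb, rfl⟩
      obtain ⟨μ, hoff, hsum, hval⟩ := (ih y).mp hy
      refine ⟨fun a => μ a + (if a = b then 1 else 0), ?_, ?_, ?_⟩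
      · intro a ha
        have : a ≠ b := fun h => ha (h ▸ hb)
        simp [hoff a ha, this]
      · rw [Finset.sum_add_distrib, hsum, Finset.sum_ite_eq' A b (fun _ => 1), if_pos hb]
      · push_cast
        have hterm : ∀ a ∈ A, ((μ a : ℤ) + if a = b then 1 else 0) * a
            = (μ a : ℤ) * a + (if a = b then a else 0) := by
          intro a _
          rcases eq_or_ne a b with h | h <;> simp [h] <;> ring
        rw [Finset.sum_congr rfl hterm, Finset.sum_add_distrib, hval,
          Finset.sum_ite_eq' A b (fun a => a), if_pos hb]
    · rintro ⟨μ, hoff, hsum, rfl⟩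
      have hex : ∃ b ∈ A, μ b ≠ 0 := by
        by_contra hc
        push_neg at hc
        rw [Finset.sum_eq_zero (fun a ha => hc a ha)] at hsum
        omega
      obtain ⟨b, hb, hμb⟩ := hex
      set μ' : ℤ → ℕ := fun a => if a = b then μ b - 1 else μ a with hμ'
      have hsum' : ∑ a ∈ A, μ' a = n := by
        rw [← Finset.add_sum_erase A μ' hb] at *
        rw [← Finset.add_sum_erase A μ hb] at hsum
        have he : ∑ a ∈ A.erase b, μ' a = ∑ a ∈ A.erase b, μ a :=
          Finset.sum_congr rfl (fun a ha => by
            simp [hμ', (Finset.ne_of_mem_erase ha)])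
        simp only [hμ', if_pos rfl] at *
        omega
      have hy : (∑ a ∈ A, (μ' a : ℤ) * a) ∈ n • A :=
        (ih _).mpr ⟨μ', fun a ha => by
          have : a ≠ b := fun h => ha (h ▸ hb)
          simp [hμ', this, hoff a ha], hsum', rfl⟩
      refine ⟨_, hy, b, hb, ?_⟩
      rw [← Finset.add_sum_erase A (fun a => (μ' a : ℤ) * a) hb,
        ← Finset.add_sum_erase A (fun a => (μ a : ℤ) * a) hb]
      have he : ∑ a ∈ A.erase b, (μ' a : ℤ) * a = ∑ a ∈ A.erase b, (μ a : ℤ) * a :=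
        Finset.sum_congr rfl (fun a ha => by
          simp [hμ', (Finset.ne_of_mem_erase ha)])
      rw [he]
      simp only [hμ', if_pos rfl]
      have : ((μ b - 1 : ℕ) : ℤ) = (μ b : ℤ) - 1 := by
        have : 1 ≤ μ b := by omega
        push_cast [this]
        ring
      rw [this]
      ring

lemma genSumset_eq_nsmul (A : Finset ℤ) (r j : ℕ) (hjr : j ≤ r) :
    genSumset r j A = (↑(j • A) : Set ℤ) := by
  ext x
  simp only [genSumset, Set.mem_setOf_eq, Finset.coe_sort_coe, Finset.mem_coe,
    mem_nsmul_iff]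
  constructor
  · rintro ⟨lam, _, hoff, hsum, hval⟩
    exact ⟨lam, hoff, hsum, hval⟩
  · rintro ⟨μ, hoff, hsum, hval⟩
    refine ⟨μ, fun a => ?_, hoff, hsum, hval⟩
    by_cases ha : a ∈ A
    · calc μ a ≤ ∑ b ∈ A, μ b := Finset.single_le_sum (fun b _ => Nat.zero_le _) ha
        _ ≤ r := by omega
    · simp [hoff a ha]

lemma genSumset_le (A : Finset ℤ) (r h : ℕ) (x : ℤ) (hx : x ∈ genSumset r h A) :
    h ≤ A.card * r := by
  obtain ⟨lam, hbd, _, hsum, _⟩ := hx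
  calc h = ∑ a ∈ A, lam a := hsum.symm
    _ ≤ ∑ _a ∈ A, r := Finset.sum_le_sum (fun a _ => hbd a)
    _ = A.card * r := by rw [Finset.sum_const, smul_eq_mul]

lemma refl_mem (A : Finset ℤ) (r h : ℕ) (x : ℤ) (hx : x ∈ genSumset r h A) :
    (∑ a ∈ A, (r : ℤ) * a) - x ∈ genSumset r (A.card * r - h) A := by
  obtain ⟨lam, hbd, hoff, hsum, hval⟩ := hx
  refine ⟨fun a => if a ∈ A then r - lam a else 0, fun a => ?_, fun a ha => by simp [ha],
    ?_, ?_⟩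
  · by_cases ha : a ∈ A <;> simp [ha] <;> omega
  · have : ∑ a ∈ A, (if a ∈ A then r - lam a else 0) = ∑ a ∈ A, (r - lam a) :=
      Finset.sum_congr rfl (fun a ha => by simp [ha])
    rw [this]
    have h2 : ∑ a ∈ A, (r - lam a) + ∑ a ∈ A, lam a = ∑ a ∈ A, r := by
      rw [← Finset.sum_add_distrib]
      exact Finset.sum_congr rfl (fun a _ => by have := hbd a; omega)
    rw [Finset.sum_const, smul_eq_mul] at h2
    omega
  · have : ∀ a ∈ A, ((if a ∈ A then r - lam a else 0 : ℕ) : ℤ) * a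
        = (r : ℤ) * a - (lam a : ℤ) * a := by
      intro a ha
      have := hbd a
      rw [if_pos ha]
      push_cast [this]
      ring
    rw [Finset.sum_congr rfl this, Finset.sum_sub_distrib, hval]

lemma nsmul_nonempty (A : Finset ℤ) (j : ℕ) (hA : A.Nonempty) : (j • A).Nonempty := by
  induction j with
  | zero => exact ⟨0, by simp [zero_nsmul, Finset.mem_zero]⟩
  | succ n ih => rw [succ_nsmul]; exact ih.add hA

lemma nsmul_min (A : Finset ℤ) (j : ℕ) (hA : A.Nonempty)
    (x : ℤ) (hx : x ∈ j • A) : (j : ℤ) * A.min' hA ≤ x := by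
  obtain ⟨μ, hoff, hsum, hval⟩ := (mem_nsmul_iff A j x).mp hx
  calc (j : ℤ) * A.min' hA = ∑ a ∈ A, (μ a : ℤ) * A.min' hA := by
        rw [← Finset.sum_mul]
        norm_cast
        rw [hsum]
    _ ≤ ∑ a ∈ A, (μ a : ℤ) * a := Finset.sum_le_sum (fun a ha =>
        mul_le_mul_of_nonneg_left (Finset.min'_le A a ha) (by positivity))
    _ = x := hval

lemma nsmul_min_mem (A : Finset ℤ) (j : ℕ) (hA : A.Nonempty) :
    (j : ℤ) * A.min' hA ∈ j • A := by
  rw [mem_nsmul_iff]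
  refine ⟨fun a => if a = A.min' hA then j else 0, fun a ha => ?_, ?_, ?_⟩
  · have : a ≠ A.min' hA := fun h => ha (h ▸ A.min'_mem hA)
    simp [this]
  · rw [Finset.sum_ite_eq' A _ (fun _ => j), if_pos (A.min'_mem hA)]
  · have : ∀ a ∈ A, ((if a = A.min' hA then j else 0 : ℕ) : ℤ) * a
        = if a = A.min' hA then (j : ℤ) * A.min' hA else 0 := by
      intro a _
      rcases eq_or_ne a (A.min' hA) with h | h <;> simp [h]
    rw [Finset.sum_congr rfl this, Finset.sum_ite_eq' A _ (fun _ => (j : ℤ) * A.min' hA),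
      if_pos (A.min'_mem hA)]

lemma card_nsmul_ge (A : Finset ℤ) (hA : A.Nonempty) (j : ℕ) (hj : 1 ≤ j) :
    j * (A.card - 1) + 1 ≤ (j • A).card := by
  induction j with
  | zero => omega
  | succ n ih =>
    rcases Nat.eq_or_lt_of_le hj with h | h
    · have := Finset.card_pos.mpr hA
      simp only [← h, one_nsmul]
      omega
    · have hn : 1 ≤ n := by omega
      have := ih hn
      have hcd := cauchy_davenport_add_of_linearOrder_isCancelAdd
        (nsmul_nonempty A n hA) hA
      rw [succ_nsmul]
      have hc1 : 1 ≤ A.card := Finset.card_pos.mpr hA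
      have hc2 : 1 ≤ (n • A).card := Finset.card_pos.mpr (nsmul_nonempty A n hA)
      have hmul : (n + 1) * (A.card - 1) = n * (A.card - 1) + (A.card - 1) :=
        Nat.succ_mul _ _
      omega

lemma card_nsmul_ge' (A : Finset ℤ) (hA : A.Nonempty) (j : ℕ) (hj : 2 ≤ j) :
    ((2 : ℕ) • A).card + (j - 2) * (A.card - 1) ≤ (j • A).card := by
  induction j with
  | zero => omega
  | succ n ih =>
    rcases Nat.eq_or_lt_of_le hj with h | h
    · rw [← h]; omega
    · have hn : 2 ≤ n := by omega
      have := ih hn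
      have hcd := cauchy_davenport_add_of_linearOrder_isCancelAdd
        (nsmul_nonempty A n hA) hA
      rw [succ_nsmul A n]
      have hc1 : 1 ≤ A.card := Finset.card_pos.mpr hA
      have hc2 : 1 ≤ (n • A).card := Finset.card_pos.mpr (nsmul_nonempty A n hA)
      have he : n + 1 - 2 = (n - 2) + 1 := by omega
      rw [he]
      have hmul : (n - 2 + 1) * (A.card - 1) = (n - 2) * (A.card - 1) + (A.card - 1) :=
        Nat.succ_mul _ _
      omega

lemma chain_strictmono (g : ℕ → ℤ) (n : ℕ) (h : ∀ i, i + 1 ≤ n → g i < g (i + 1)) :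
    ∀ i j, i < j → j ≤ n → g i < g j := by
  intro i j hij hjn
  induction j with
  | zero => omega
  | succ m ih =>
    rcases Nat.lt_or_ge i m with hm | hm
    · exact lt_trans (ih hm (by omega)) (h m hjn)
    · have : i = m := by omega
      subst this
      exact h i hjn

lemma freiman_inverse (A : Finset ℤ) (k : ℕ) (hk : 2 ≤ k) (hAcard : A.card = k)
    (hcard : (A + A).card = 2 * k - 1) :
    ∃ δ : ℤ, 0 < δ ∧ A = (Finset.range k).image
      (fun u : ℕ => A.min' (Finset.card_pos.mp (by omega)) + (u : ℤ) * δ) := by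
  have hk0 : 0 < k := by omega
  set a : ℕ → ℤ := fun i => A.orderEmbOfFin hAcard ⟨min i (k - 1), by omega⟩ with ha
  have hamem : ∀ i, a i ∈ A := fun i => A.orderEmbOfFin_mem hAcard _
  have hmono : ∀ i j, i < j → j ≤ k - 1 → a i < a j := by
    intro i j hij hjk
    apply (A.orderEmbOfFin hAcard).strictMono
    simp only [Fin.mk_lt_mk]
    omega
  set δ : ℤ := a 1 - a 0 with hδ
  have hδpos : 0 < δ := by
    have := hmono 0 1 (by omega) (by omega)
    omega
  -- the two chains
  set p : ℕ → ℤ := fun i => if i ≤ k - 1 then a 0 + a i else a (i - (k - 1)) + a (k - 1)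
    with hp
  set q : ℕ → ℤ := fun i => a (i / 2) + a (i / 2 + i % 2) with hq
  have hpmem : ∀ i, p i ∈ A + A := by
    intro i
    simp only [hp]
    split_ifs <;> exact Finset.add_mem_add (hamem _) (hamem _)
  have hqmem : ∀ i, q i ∈ A + A := fun i => Finset.add_mem_add (hamem _) (hamem _)
  have hpadj : ∀ i, i + 1 ≤ 2 * k - 2 → p i < p (i + 1) := by
    intro i hi
    rw [hp]
    simp only
    rcases Nat.lt_or_ge (i + 1) k with h1 | h1
    · rw [if_pos (by omega : i ≤ k - 1), if_pos (by omega : i + 1 ≤ k - 1)]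
      exact add_lt_add_right (hmono i (i + 1) (by omega) (by omega)) _
    · rcases Nat.eq_or_lt_of_le h1 with h2 | h2
      · rw [if_pos (by omega : i ≤ k - 1), if_neg (by omega : ¬ i + 1 ≤ k - 1)]
        have hi' : i = k - 1 := by omega
        have h3 : i + 1 - (k - 1) = 1 := by omega
        rw [h3, hi']
        have := hmono 0 1 (by omega) (by omega)
        omega
      · rw [if_neg (by omega : ¬ i ≤ k - 1), if_neg (by omega : ¬ i + 1 ≤ k - 1)]
        have h3 : i + 1 - (k - 1) = (i - (k - 1)) + 1 := by omega
        rw [h3]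
        exact add_lt_add_left (hmono _ _ (by omega) (by omega)) _
  have hqadj : ∀ i, i + 1 ≤ 2 * k - 2 → q i < q (i + 1) := by
    intro i hi
    rw [hq]
    simp only
    rcases Nat.even_or_odd i with ⟨m, hm⟩ | ⟨m, hm⟩
    · have h1 : i / 2 = m := by omega
      have h2 : i % 2 = 0 := by omega
      have h3 : (i + 1) / 2 = m := by omega
      have h4 : (i + 1) % 2 = 1 := by omega
      rw [h1, h2, h3, h4]
      simp only [Nat.add_zero]
      exact add_lt_add_right (hmono m (m + 1) (by omega) (by omega)) _
    · have h1 : i / 2 = m := by omega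
      have h2 : i % 2 = 1 := by omega
      have h3 : (i + 1) / 2 = m + 1 := by omega
      have h4 : (i + 1) % 2 = 0 := by omega
      rw [h1, h2, h3, h4]
      simp only [Nat.add_zero]
      linarith [hmono m (m + 1) (by omega) (by omega)]
  -- both chains coincide with orderEmbOfFin of A + A
  have hc2 : (A + A).card = 2 * k - 1 := hcard
  have hpeq : ∀ i : Fin (2 * k - 1), p i.val = (A + A).orderEmbOfFin hc2 i := by
    have := Finset.orderEmbOfFin_unique (f := fun i : Fin (2 * k - 1) => p i.val) hc2
      (fun i => hpmem _) ?_
    · exact fun i => congrFun this i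
    · intro i j hij
      exact chain_strictmono p (2 * k - 2) hpadj i.val j.val hij (by omega)
  have hqeq : ∀ i : Fin (2 * k - 1), q i.val = (A + A).orderEmbOfFin hc2 i := by
    have := Finset.orderEmbOfFin_unique (f := fun i : Fin (2 * k - 1) => q i.val) hc2
      (fun i => hqmem _) ?_
    · exact fun i => congrFun this i
    · intro i j hij
      exact chain_strictmono q (2 * k - 2) hqadj i.val j.val hij (by omega)
  have hpq : ∀ i : ℕ, i < 2 * k - 1 → p i = q i := by
    intro i hi
    rw [hpeq ⟨i, hi⟩, ← hqeq ⟨i, hi⟩]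
  -- derive linear structure
  have hlin : ∀ i, i ≤ k - 1 → a i = a 0 + (i : ℤ) * δ := by
    intro i
    induction i using Nat.strong_induction_on with
    | _ i ih =>
      intro hik
      match i, hik with
      | 0, _ => simp
      | 1, _ => rw [hδ]; push_cast; ring
      | (n + 2), hik =>
        have hrel := hpq (n + 2) (by omega)
        rw [hp, hq] at hrel
        simp only [if_pos hik] at hrel
        set m := (n + 2) / 2 with hm
        set e := (n + 2) % 2 with he
        have hme : 2 * m + e = n + 2 := by omega
        have hm1 : m < n + 2 := by omega
        have hme1 : m + e < n + 2 := by omega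
        have hmk : m ≤ k - 1 := by omega
        have hmek : m + e ≤ k - 1 := by omega
        have e1 := ih m hm1 hmk
        have e2 := ih (m + e) hme1 hmek
        rw [e1, e2] at hrel
        push_cast at hrel ⊢
        have hc : ((n : ℤ) + 2) = 2 * (m : ℤ) + e := by exact_mod_cast hme.symm
        rw [hc]
        linarith
  -- conclude
  refine ⟨δ, hδpos, ?_⟩
  have hmin : A.min' (Finset.card_pos.mp (by omega)) = a 0 := by
    rw [ha]
    simp only [Nat.min_eq_left (by omega : 0 ≤ k - 1)]
    exact (Finset.orderEmbOfFin_zero hAcard hk0).symm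
  rw [hmin]
  apply Finset.eq_of_superset_of_card_ge
  · intro x hx
    simp only [Finset.mem_image, Finset.mem_range] at hx
    obtain ⟨u, hu, rfl⟩ := hx
    rw [← hlin u (by omega)]
    exact hamem u
  · rw [hAcard, Finset.card_image_of_injective _ (fun u v huv => ?_), Finset.card_range]
    have : (u : ℤ) * δ = (v : ℤ) * δ := by omega
    have := mul_right_cancel₀ (ne_of_gt hδpos) this
    exact_mod_cast this

lemma nsmul_of_ap (a0 δ : ℤ) (k : ℕ) (hk : 1 ≤ k)
    (A : Finset ℤ) (hA : A = (Finset.range k).image (fun u : ℕ => a0 + (u : ℤ) * δ))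
    (j : ℕ) (hj : 1 ≤ j) :
    j • A = (Finset.range (j * (k - 1) + 1)).image
      (fun u : ℕ => (j : ℤ) * a0 + (u : ℤ) * δ) := by
  induction j with
  | zero => omega
  | succ n ih =>
    rcases Nat.eq_or_lt_of_le hj with h | h
    · rw [← h]
      simp only [one_nsmul, Nat.cast_one, one_mul]
      have hkk : k - 1 + 1 = k := by omega
      rw [hkk, hA]
    · have hn : 1 ≤ n := by omega
      have hsm : (n + 1) * (k - 1) = n * (k - 1) + (k - 1) := Nat.succ_mul n (k - 1)
      rw [succ_nsmul A n, ih hn]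
      ext x
      simp only [Finset.mem_add, Finset.mem_image, Finset.mem_range, hA]
      constructor
      · rintro ⟨y, ⟨u, hu, rfl⟩, b, ⟨v, hv, rfl⟩, rfl⟩
        refine ⟨u + v, by omega, ?_⟩
        push_cast
        ring
      · rintro ⟨w, hw, rfl⟩
        set u0 : ℕ := min w (n * (k - 1)) with hu0
        have hu0w : u0 ≤ w := min_le_left _ _
        refine ⟨(n : ℤ) * a0 + (u0 : ℤ) * δ, ⟨u0, by omega, rfl⟩,
          a0 + ((w - u0 : ℕ) : ℤ) * δ, ⟨w - u0, by omega, rfl⟩, ?_⟩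
        have hc : ((w - u0 : ℕ) : ℤ) = (w : ℤ) - (u0 : ℤ) := by omega
        rw [hc]
        push_cast
        ring

lemma ap_of_shift_closed (J : Finset ℕ) (d : ℕ) (hd : 0 < d) (hne : J.Nonempty)
    (hcl : ∀ j ∈ J, j ≠ J.max' hne → j + d ∈ J) :
    J = (Finset.range J.card).image (fun i => J.min' hne + i * d) ∧
      J.max' hne = J.min' hne + (J.card - 1) * d := by
  set M := J.max' hne with hM
  set m := J.min' hne with hm
  have hdvd : ∀ j ∈ J, d ∣ M - j ∧ j ≤ M := by
    intro j hj
    have hjM : j ≤ M := Finset.le_max' J j hj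
    refine ⟨?_, hjM⟩
    obtain ⟨c, hc⟩ : ∃ c, M - j ≤ c := ⟨M - j, le_refl _⟩
    clear hjM
    induction c generalizing j with
    | zero =>
      have : j = M := by
        have := Finset.le_max' J j hj
        omega
      simp [this]
    | succ n ihn =>
      rcases eq_or_ne j M with h | h
      · simp [h]
      · have h1 : j + d ∈ J := hcl j hj h
        have h2 : j + d ≤ M := Finset.le_max' J _ h1
        have h3 : M - (j + d) ≤ n := by
          have := Finset.le_max' J j hj
          omega
        obtain ⟨e, he⟩ := ihn (j + d) h1 h3
        refine ⟨e + 1, ?_⟩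
        have hh : d * (e + 1) = d * e + d := by ring
        omega
  have hclimb : ∀ j ∈ J, ∀ i : ℕ, j + i * d ≤ M → j + i * d ∈ J := by
    intro j hj i
    induction i with
    | zero => simpa using fun _ => hj
    | succ n ihn =>
      intro hle
      have hsm : (n + 1) * d = n * d + d := Nat.succ_mul n d
      have h1 : j + n * d ∈ J := ihn (by omega)
      have h2 : j + n * d ≠ M := by omega
      have h4 := hcl _ h1 h2
      have he : j + (n + 1) * d = j + n * d + d := by omega
      rw [he]
      exact h4
  have hmJ : m ∈ J := Finset.min'_mem J hne
  have hMJ : M ∈ J := Finset.max'_mem J hne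
  obtain ⟨c, hcle⟩ : ∃ c, m + c * d = M := by
    obtain ⟨c, hc⟩ := (hdvd m hmJ).1
    have h5 := (hdvd m hmJ).2
    have h6 : c * d = d * c := Nat.mul_comm c d
    exact ⟨c, by omega⟩
  have hJeq : J = (Finset.range (c + 1)).image (fun i => m + i * d) := by
    apply Finset.Subset.antisymm
    · intro j hj
      simp only [Finset.mem_image, Finset.mem_range]
      obtain ⟨hdj, hjM⟩ := hdvd j hj
      have hmj : m ≤ j := Finset.min'_le J j hj
      obtain ⟨e, he⟩ := hdj
      have h1 : (c - e) * d = c * d - e * d := Nat.sub_mul c e d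
      have h2 : e * d = d * e := Nat.mul_comm e d
      exact ⟨c - e, by omega, by omega⟩
    · intro x hx
      simp only [Finset.mem_image, Finset.mem_range] at hx
      obtain ⟨i, hi, rfl⟩ := hx
      apply hclimb m hmJ
      have h7 : i * d ≤ c * d := Nat.mul_le_mul_right d (by omega)
      omega
  have hcard : J.card = c + 1 := by
    rw [hJeq, Finset.card_image_of_injective, Finset.card_range]
    intro u v huv
    simp only at huv
    have h8 : u * d = v * d := by omega
    exact Nat.eq_of_mul_eq_mul_right hd h8
  constructor
  · rw [hcard, hJeq]
  · rw [hcard]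
    simp only [Nat.add_sub_cancel]
    omega

theorem stmt_8 (k t r hmin hmax : ℕ) (A : Finset ℤ) (H : Finset ℕ)
    (hk : 6 ≤ k) (hAcard : A.card = k) (hApos : ∀ a ∈ A, 0 < a)
    (hr2 : 2 ≤ r) (ht : 2 ≤ t) (hHcard : H.card = t) (hHpos : ∀ x ∈ H, 0 < x)
    (hHne : H.Nonempty)
    (hminH : hmin = H.min' hHne) (hmaxH : hmax = H.max' hHne)
    (hlow : (k - 1) * r - 1 < hmin) (hlt : hmin < hmax) (hup : hmax < k * r)
    (heq : ((HSumset r H A).ncard : ℤ) =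
      ((hmin / r : ℕ) : ℤ) * r * ((k : ℤ) - ((hmin / r : ℕ) : ℤ))
        + ((hmin : ℤ) - ((hmin / r : ℕ) : ℤ) * r) * ((k : ℤ) - 2 * ((hmin / r : ℕ) : ℤ) - 1)
        + t) :
    ∃ d : ℕ, 1 ≤ d ∧ d ≤ r - 1 ∧ IsAPNat H d ∧
      IsAPInt A ((d : ℤ) * A.min' (Finset.card_pos.mp (by rw [hAcard]; omega))) := by
  have hA : A.Nonempty := Finset.card_pos.mp (by rw [hAcard]; omega)
  set a0 : ℤ := A.min' hA with ha0
  have ha0pos : 0 < a0 := hApos _ (A.min'_mem hA)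
  have hminmem : hmin ∈ H := hminH ▸ H.min'_mem hHne
  have hmaxmem : hmax ∈ H := hmaxH ▸ H.max'_mem hHne
  have hminle : ∀ h ∈ H, hmin ≤ h := fun h hh => hminH ▸ H.min'_le h hh
  have hmaxge : ∀ h ∈ H, h ≤ hmax := fun h hh => hmaxH ▸ H.le_max' h hh
  have hk1r0 : 5 * 2 ≤ (k - 1) * r := Nat.mul_le_mul (by omega) (by omega)
  have hk1r : 10 ≤ (k - 1) * r := by omega
  have hminlow : (k - 1) * r ≤ hmin := by omega
  have hkr : (k - 1) * r + r = k * r := by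
    have h1 : (1 : ℕ) ≤ k := by omega
    zify [h1]
    ring
  have hminup : hmin < k * r := by omega
  have hdivr : hmin / r = k - 1 := by
    apply Nat.div_eq_of_lt_le
    · exact hminlow
    · have : (k - 1 + 1) * r = (k - 1) * r + r := Nat.succ_mul _ _
      omega
  -- the reflected union of Minkowski sums
  set T : ℤ := ∑ a ∈ A, (r : ℤ) * a with hT
  set BF : Finset ℤ := H.biUnion (fun h => (k * r - h) • A) with hBF
  have hkrh : ∀ h ∈ H, 1 ≤ k * r - h ∧ k * r - h ≤ r ∧ h ≤ k * r := by
    intro h hh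
    have h1 := hminle h hh
    have h2 := hmaxge h hh
    omega
  have hset : HSumset r H A = ↑(BF.image (fun y => T - y)) := by
    ext x
    simp only [HSumset, Set.mem_iUnion, Finset.coe_image, Set.mem_image, Finset.mem_coe,
      Finset.mem_biUnion, hBF]
    constructor
    · rintro ⟨h, hh, hx⟩
      obtain ⟨hh1, hh2, hh3⟩ := hkrh h hh
      have h2 := refl_mem A r h x hx
      rw [hAcard] at h2
      rw [genSumset_eq_nsmul A r _ hh2] at h2
      exact ⟨T - x, ⟨h, hh, h2⟩, by ring⟩
    · rintro ⟨y, ⟨h, hh, hy⟩, rfl⟩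
      obtain ⟨hh1, hh2, hh3⟩ := hkrh h hh
      refine ⟨h, hh, ?_⟩
      have hy' : y ∈ genSumset r (k * r - h) A := by
        rw [genSumset_eq_nsmul A r _ hh2]
        exact hy
      have h2 := refl_mem A r (k * r - h) y hy'
      rw [hAcard] at h2
      have h3 : k * r - (k * r - h) = h := by omega
      rw [h3] at h2
      exact h2
  have hncard : (HSumset r H A).ncard = BF.card := by
    rw [hset, Set.ncard_coe_finset,
      Finset.card_image_of_injective _ (fun u v huv => by omega)]
  -- J, jt
  set J : Finset ℕ := H.image (fun h => k * r - h) with hJ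
  have hBFJ : BF = J.biUnion (fun j => j • A) := by
    rw [hJ, hBF]
    ext x
    simp only [Finset.mem_biUnion, Finset.mem_image]
    constructor
    · rintro ⟨h, hh, hx⟩
      exact ⟨k * r - h, ⟨h, hh, rfl⟩, hx⟩
    · rintro ⟨j, ⟨h, hh, rfl⟩, hx⟩
      exact ⟨h, hh, hx⟩
  have hJcard : J.card = t := by
    rw [hJ, Finset.card_image_of_injOn, hHcard]
    intro x hx y hy hxy
    have h1 := hmaxge x hx
    have h2 := hmaxge y hy
    simp only at hxy
    omega
  set jt : ℕ := k * r - hmin with hjt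
  have hjtJ : jt ∈ J := by
    rw [hJ]
    exact Finset.mem_image_of_mem _ hminmem
  have hjtmax : ∀ j ∈ J, j ≤ jt := by
    intro j hj
    rw [hJ] at hj
    obtain ⟨h, hh, rfl⟩ := Finset.mem_image.mp hj
    have := hminle h hh
    omega
  have hjt2 : 2 ≤ jt := by omega
  have hjtr : jt ≤ r := by omega
  have hjpos : ∀ j ∈ J, 1 ≤ j := by
    intro j hj
    rw [hJ] at hj
    obtain ⟨h, hh, rfl⟩ := Finset.mem_image.mp hj
    have := hmaxge h hh
    omega
  -- cardinality equation
  have hcardBF : BF.card = (k - 1) * jt + t := by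
    rw [hncard] at heq
    rw [hdivr] at heq
    have h1 : (1 : ℕ) ≤ k := by omega
    have hjtz : (jt : ℤ) = (k : ℤ) * r - hmin := by
      rw [hjt]
      push_cast [hminup.le]
      ring
    zify [h1, hminup.le]
    push_cast [h1] at heq
    linear_combination heq - ((k : ℤ) - 1) * hjtz
  -- the extra minima
  set M : Finset ℤ := (J.erase jt).image (fun j : ℕ => (j : ℤ) * a0) with hM
  have hsub : jt • A ∪ M ⊆ BF := by
    rw [hBFJ]
    intro x hx
    rcases Finset.mem_union.mp hx with hx | hx
    · exact Finset.mem_biUnion.mpr ⟨jt, hjtJ, hx⟩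
    · rw [hM] at hx
      obtain ⟨j, hj, rfl⟩ := Finset.mem_image.mp hx
      exact Finset.mem_biUnion.mpr ⟨j, Finset.mem_of_mem_erase hj, nsmul_min_mem A j hA⟩
  have hdisj : Disjoint (jt • A) M := by
    rw [Finset.disjoint_left]
    intro x hx hxM
    rw [hM] at hxM
    obtain ⟨j, hj, rfl⟩ := Finset.mem_image.mp hxM
    have hjlt : j < jt :=
      lt_of_le_of_ne (hjtmax j (Finset.mem_of_mem_erase hj)) (Finset.ne_of_mem_erase hj)
    have h1 : (jt : ℤ) * a0 ≤ (j : ℤ) * a0 := le_trans (nsmul_min A jt hA _ hx) (le_refl _)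
    have h2 : (j : ℤ) * a0 < (jt : ℤ) * a0 :=
      mul_lt_mul_of_pos_right (by exact_mod_cast hjlt) ha0pos
    omega
  have hMcard : M.card = t - 1 := by
    rw [hM, Finset.card_image_of_injOn, Finset.card_erase_of_mem hjtJ, hJcard]
    intro x _ y _ hxy
    simp only at hxy
    have := mul_right_cancel₀ (ne_of_gt ha0pos) hxy
    exact_mod_cast this
  have hucard : (jt • A ∪ M).card = (jt • A).card + (t - 1) := by
    rw [Finset.card_union_of_disjoint hdisj, hMcard]
  have hge : jt * (k - 1) + 1 ≤ (jt • A).card := by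
    have := card_nsmul_ge A hA jt (by omega)
    rw [hAcard] at this
    exact this
  have hle : (jt • A ∪ M).card ≤ BF.card := Finset.card_le_card hsub
  have hmulc : (k - 1) * jt = jt * (k - 1) := Nat.mul_comm _ _
  have hjtcard : (jt • A).card = jt * (k - 1) + 1 := by omega
  have hBFeq : BF = jt • A ∪ M := by
    apply (Finset.eq_of_subset_of_card_le hsub ?_).symm
    omega
  -- |2A| = 2k - 1
  have h2Ale : ((2 : ℕ) • A).card ≤ 2 * k - 1 := by
    have h1 := card_nsmul_ge' A hA jt hjt2
    rw [hAcard] at h1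
    have h2 : (jt - 2) * (k - 1) = jt * (k - 1) - 2 * (k - 1) := Nat.sub_mul _ _ _
    have h3 : 2 * (k - 1) ≤ jt * (k - 1) := Nat.mul_le_mul_right _ (by omega)
    omega
  have h2Age : 2 * k - 1 ≤ ((2 : ℕ) • A).card := by
    have := card_nsmul_ge A hA 2 (by omega)
    rw [hAcard] at this
    omega
  have h2A : (A + A).card = 2 * k - 1 := by
    rw [← two_nsmul A]
    omega
  obtain ⟨δ, hδpos, hAstr⟩ := freiman_inverse A k (by omega) hAcard h2A
  have hAstr' : A = (Finset.range k).image (fun u : ℕ => a0 + (u : ℤ) * δ) := hAstr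
  have hnsmulstr : ∀ j : ℕ, 1 ≤ j → j • A = (Finset.range (j * (k - 1) + 1)).image
      (fun u : ℕ => (j : ℤ) * a0 + (u : ℤ) * δ) :=
    fun j hj => nsmul_of_ap a0 δ k (by omega) A hAstr' j hj
  -- membership of the "second" element of j • A
  have hsecond : ∀ j ∈ J, (j : ℤ) * a0 + δ ∈ BF := by
    intro j hj
    rw [hBFJ]
    apply Finset.mem_biUnion.mpr
    refine ⟨j, hj, ?_⟩
    rw [hnsmulstr j (hjpos j hj)]
    apply Finset.mem_image.mpr
    refine ⟨1, ?_, by push_cast; ring⟩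
    rw [Finset.mem_range]
    have : 1 * 1 ≤ j * (k - 1) := Nat.mul_le_mul (hjpos j hj) (by omega)
    omega
  -- js : the second largest element of J
  have hneJe : (J.erase jt).Nonempty := by
    rw [← Finset.card_pos, Finset.card_erase_of_mem hjtJ, hJcard]
    omega
  set js : ℕ := (J.erase jt).max' hneJe with hjs
  have hjsJe : js ∈ J.erase jt := (J.erase jt).max'_mem hneJe
  have hjsJ : js ∈ J := Finset.mem_of_mem_erase hjsJe
  have hjsne : js ≠ jt := Finset.ne_of_mem_erase hjsJe
  have hjslt : js < jt := lt_of_le_of_ne (hjtmax js hjsJ) hjsne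
  have hjsmax : ∀ l ∈ J, js < l → l = jt := by
    intro l hl hgt
    by_contra hne
    have : l ∈ J.erase jt := Finset.mem_erase.mpr ⟨hne, hl⟩
    have := (J.erase jt).le_max' l this
    omega
  set d : ℕ := jt - js with hd
  have hd1 : 1 ≤ d := by omega
  have hdz : ((d : ℕ) : ℤ) = (jt : ℤ) - (js : ℤ) := by
    rw [hd]
    push_cast [hjslt.le]
    ring
  -- Step A : δ = d * a0
  have hδeq : δ = (d : ℤ) * a0 := by
    have hx := hsecond js hjsJ
    rw [hBFeq] at hx
    rcases Finset.mem_union.mp hx with hx | hx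
    · rw [hnsmulstr jt (by omega)] at hx
      obtain ⟨u, hu, hxu⟩ := Finset.mem_image.mp hx
      rcases Nat.eq_zero_or_pos u with h0 | h0
      · subst h0
        rw [hdz, sub_mul]
        push_cast at hxu
        linarith
      · exfalso
        have h1 : (js : ℤ) * a0 < (jt : ℤ) * a0 :=
          mul_lt_mul_of_pos_right (by exact_mod_cast hjslt) ha0pos
        have h3 : (1 : ℤ) ≤ (u : ℤ) := by exact_mod_cast h0
        have h2 : (δ : ℤ) ≤ (u : ℤ) * δ := le_mul_of_one_le_left hδpos.le h3
        linarith [hxu]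
    · exfalso
      rw [hM] at hx
      obtain ⟨l, hl, hxl⟩ := Finset.mem_image.mp hx
      have hlJ : l ∈ J := Finset.mem_of_mem_erase hl
      have hlle : l ≤ js := by
        by_contra hgt
        push_neg at hgt
        exact (Finset.ne_of_mem_erase hl) (hjsmax l hlJ hgt)
      have h1 : (l : ℤ) * a0 ≤ (js : ℤ) * a0 :=
        mul_le_mul_of_nonneg_right (by exact_mod_cast hlle) ha0pos.le
      linarith [hxl]
  -- Step B : J is closed under adding d below jt
  have hstep : ∀ j ∈ J, j ≠ jt → j + d ∈ J := by
    intro j hj hjne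
    have hjlt : j < jt := lt_of_le_of_ne (hjtmax j hj) hjne
    have hx := hsecond j hj
    rw [hBFeq] at hx
    have hval : (j : ℤ) * a0 + δ = ((j + d : ℕ) : ℤ) * a0 := by
      rw [hδeq]
      push_cast
      ring
    rcases Finset.mem_union.mp hx with hx | hx
    · rw [hnsmulstr jt (by omega)] at hx
      obtain ⟨u, hu, hxu⟩ := Finset.mem_image.mp hx
      rw [hval] at hxu
      rw [hδeq] at hxu
      have hprod : ((jt : ℤ) + (u : ℤ) * d) * a0 = ((j : ℤ) + (d : ℤ)) * a0 := by
        push_cast at hxu ⊢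
        linear_combination hxu
      have hcanc := mul_right_cancel₀ (ne_of_gt ha0pos) hprod
      have hnat : jt + u * d = j + d := by exact_mod_cast hcanc
      rcases Nat.eq_zero_or_pos u with h0 | h0
      · subst h0
        simp only [Nat.zero_mul, Nat.add_zero] at hnat
        rw [← hnat]
        exact hjtJ
      · exfalso
        have : d ≤ u * d := Nat.le_mul_of_pos_left d h0
        omega
    · rw [hM] at hx
      obtain ⟨l, hl, hxl⟩ := Finset.mem_image.mp hx
      rw [hval] at hxl
      have hcanc := mul_right_cancel₀ (ne_of_gt ha0pos) hxl
      have : l = j + d := by exact_mod_cast hcanc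
      rw [← this]
      exact Finset.mem_of_mem_erase hl
  -- J is an AP
  have hJne : J.Nonempty := ⟨jt, hjtJ⟩
  have hJmax : J.max' hJne = jt :=
    le_antisymm (hjtmax _ (J.max'_mem hJne)) (J.le_max' jt hjtJ)
  set j1 : ℕ := J.min' hJne with hj1
  have hj1J : j1 ∈ J := J.min'_mem hJne
  have hj1pos : 1 ≤ j1 := hjpos j1 hj1J
  obtain ⟨hJap, hJmm⟩ := ap_of_shift_closed J d (by omega) hJne (by rw [hJmax]; exact hstep)
  rw [hJmax, hJcard] at hJmm
  rw [hJcard] at hJap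
  -- d ≤ r - 1
  have hdr : d ≤ r - 1 := by
    have h1 : d ≤ (t - 1) * d := Nat.le_mul_of_pos_left d (by omega)
    omega
  -- H is an AP
  have hHstr : H = (Finset.range t).image (fun i => hmin + i * d) := by
    apply (Finset.eq_of_subset_of_card_le ?_ ?_).symm
    · intro x hx
      obtain ⟨i, hi, rfl⟩ := Finset.mem_image.mp hx
      rw [Finset.mem_range] at hi
      have hjmem : j1 + (t - 1 - i) * d ∈ J := by
        rw [hJap]
        exact Finset.mem_image.mpr ⟨t - 1 - i, Finset.mem_range.mpr (by omega), rfl⟩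
      rw [hJ] at hjmem
      obtain ⟨h, hh, hhe⟩ := Finset.mem_image.mp hjmem
      have hhkr := (hkrh h hh).2.2
      have hsplit : (t - 1) * d = (t - 1 - i) * d + i * d := by
        rw [← Nat.add_mul]
        congr 1
        omega
      have : h = hmin + i * d := by omega
      rw [← this]
      exact hh
    · rw [hHcard, Finset.card_image_of_injective, Finset.card_range]
      intro u v huv
      simp only at huv
      have h8 : u * d = v * d := by omega
      exact Nat.eq_of_mul_eq_mul_right (by omega) h8
  refine ⟨d, hd1, hdr, ⟨hmin, by rw [hHcard]; exact hHstr⟩, ⟨a0, ?_⟩⟩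
  rw [hAcard, ← hδeq]
  exact hAstr'
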